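/- arXiv:1904.10437 — 2 statements merged into one kernel-verified Lean document; each statement's English description precedes it below -/
import Mathlib

section
/- The infimum defining the α-logarithmic negativity over PPT states equals the infimum over faithful PPT states: E_N^α(ρ_AB) = inf{ν_α(T_B(ρ_AB)‖σ_AB) : σ_AB > 0, T_B(σ_AB) > 0, Tr σ_AB = 1}. -/
open scoped Classical
open Matrix ComplexOrder

noncomputable section

variable {n : Type*} [Fintype n] [DecidableEq n]

/-- Real power of a (Hermitian) matrix via the continuous functional calculus. -/
noncomputable def mpow (A : Matrix n n ℂ) (r : ℝ) : Matrix n n ℂ :=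
  cfc (fun x : ℝ => x ^ r) A

/-- Schatten `p`-norm `(Tr[(Y†Y)^(p/2)])^(1/p)`. -/
noncomputable def schattenNorm (p : ℝ) (Y : Matrix n n ℂ) : ℝ :=
  ((mpow (Yᴴ * Y) (p / 2)).trace).re ^ (1 / p)

/-- `μ_α(X‖σ) = ‖σ^{(1-α)/(2α)} X σ^{(1-α)/(2α)}‖_α`. -/
noncomputable def muAlpha (α : ℝ) (X σ : Matrix n n ℂ) : ℝ :=
  schattenNorm α (mpow σ ((1 - α) / (2 * α)) * X * mpow σ ((1 - α) / (2 * α)))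

/-- Partial transpose on the second tensor factor. -/
def ptranspose {a b : Type*} (ρ : Matrix (a × b) (a × b) ℂ) : Matrix (a × b) (a × b) ℂ :=
  fun x y => ρ (x.1, y.2) (y.1, x.2)

/-- PPT states: positive semidefinite, positive partial transpose, unit trace. -/
def IsPPT {a b : Type*} [Fintype a] [Fintype b] (σ : Matrix (a × b) (a × b) ℂ) : Prop :=
  σ.PosSemidef ∧ (ptranspose σ).PosSemidef ∧ σ.trace = 1

/-- `ν_α(X‖σ)`, with the convention that it is `⊤` when `supp(X) ⊄ supp(σ)`. -/
noncomputable def nuAlpha (α : ℝ) (X σ : Matrix n n ℂ) : EReal :=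
  if LinearMap.range (Matrix.toLin' X) ≤ LinearMap.range (Matrix.toLin' σ) then
    ((Real.logb 2 (muAlpha α X σ) : ℝ) : EReal)
  else ⊤

/-- Logarithmic negativity `E_N(ρ) = log₂ ‖T_B(ρ)‖₁`. -/
noncomputable def EN {a b : Type*} [Fintype a] [Fintype b] [DecidableEq a] [DecidableEq b]
    (ρ : Matrix (a × b) (a × b) ℂ) : ℝ :=
  Real.logb 2 (schattenNorm 1 (ptranspose ρ))

/-- `α`-logarithmic negativity `E_N^α(ρ) = inf_{σ ∈ PPT} ν_α(T_B(ρ)‖σ)`. -/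
noncomputable def ENalpha {a b : Type*} [Fintype a] [Fintype b] [DecidableEq a] [DecidableEq b]
    (α : ℝ) (ρ : Matrix (a × b) (a × b) ℂ) : EReal :=
  ⨅ σ : {σ : Matrix (a × b) (a × b) ℂ // IsPPT σ}, nuAlpha α (ptranspose ρ) σ.1

section AuxLemmas

open Filter

variable {m : Type*} [Fintype m] [DecidableEq m]

lemma trace_hcfc {A : Matrix m m ℂ} (hA : A.IsHermitian) (f : ℝ → ℝ) :
    (hA.cfc f).trace = ∑ i, ((f (hA.eigenvalues i) : ℂ)) := by
  rw [Matrix.IsHermitian.cfc, Unitary.conjStarAlgAut_apply, Matrix.trace_mul_cycle]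
  rw [show (star (Matrix.IsHermitian.eigenvectorUnitary hA : Matrix m m ℂ)) *
      (Matrix.IsHermitian.eigenvectorUnitary hA : Matrix m m ℂ) = 1 from
    Unitary.coe_star_mul_self _]
  rw [one_mul, Matrix.trace_diagonal]
  rfl

lemma trace_cfc'' {A : Matrix m m ℂ} (hA : A.IsHermitian) (f : ℝ → ℝ) :
    (cfc f A).trace = ∑ i, ((f (hA.eigenvalues i) : ℂ)) := by
  rw [hA.cfc_eq, trace_hcfc]

lemma trace_pow_eig {A : Matrix m m ℂ} (hA : A.IsHermitian) (k : ℕ) :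
    ((A ^ k).trace) = ∑ i, ((hA.eigenvalues i : ℂ)) ^ k := by
  have h1 : cfc (fun x : ℝ => x ^ k) A = A ^ k := cfc_pow_id A k
  rw [← h1, trace_cfc'' hA]
  push_cast
  rfl

lemma re_trace_mpow {A : Matrix m m ℂ} (hA : A.IsHermitian) (q : ℝ) :
    ((mpow A q).trace).re = ∑ i, (hA.eigenvalues i) ^ q := by
  rw [mpow, trace_cfc'' hA]
  rw [show (∑ i, (((hA.eigenvalues i) ^ q : ℝ) : ℂ)) = (((∑ i, (hA.eigenvalues i) ^ q : ℝ)) : ℂ) by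
    push_cast; ring]
  exact Complex.ofReal_re _

lemma re_trace_pow_eig {A : Matrix m m ℂ} (hA : A.IsHermitian) (k : ℕ) :
    ((A ^ k).trace).re = ∑ i, (hA.eigenvalues i) ^ k := by
  rw [trace_pow_eig hA]
  rw [show (∑ i, ((hA.eigenvalues i : ℂ)) ^ k) = (((∑ i, (hA.eigenvalues i) ^ k : ℝ)) : ℂ) by
    push_cast; ring]
  exact Complex.ofReal_re _

lemma eig_le_trace {A : Matrix m m ℂ} (hA : A.PosSemidef) (i : m) :
    hA.1.eigenvalues i ≤ (A.trace).re := by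
  have h := re_trace_pow_eig hA.1 1
  simp only [pow_one] at h
  rw [h]
  exact Finset.single_le_sum (f := fun j => hA.1.eigenvalues j)
    (fun j _ => hA.eigenvalues_nonneg j) (Finset.mem_univ i)

/-- Main continuity lemma for `A ↦ Re Tr A^q` along PSD sequences. -/
lemma tendsto_re_trace_mpow {A : ℕ → Matrix m m ℂ} {A0 : Matrix m m ℂ}
    (hA : ∀ k, (A k).PosSemidef) (hA0 : A0.PosSemidef)
    (h : Tendsto A atTop (nhds A0)) {q : ℝ} (hq : 0 < q) :
    Tendsto (fun k => ((mpow (A k) q).trace).re) atTop (nhds (((mpow A0 q).trace).re)) := by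
  classical
  set f : ℝ → ℝ := fun x => x ^ q with hf
  have hfc : Continuous f := by
    rw [continuous_iff_continuousAt]
    exact fun x => Real.continuousAt_rpow_const x q (Or.inr hq.le)
  set R : ℝ := (A0.trace).re + 1 with hR
  have htr : Tendsto (fun k => ((A k).trace).re) atTop (nhds ((A0.trace).re)) := by
    have : Continuous fun B : Matrix m m ℂ => (B.trace).re :=
      Complex.continuous_re.comp (continuous_id.matrix_trace)
    exact (this.tendsto A0).comp h
  have hev : ∀ᶠ k in atTop, ∀ i, (hA k).1.eigenvalues i ∈ Set.Icc (0:ℝ) R := by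
    filter_upwards [htr.eventually (eventually_lt_nhds (by linarith : (A0.trace).re < R))]
      with k hk i
    exact ⟨(hA k).eigenvalues_nonneg i, le_trans (eig_le_trace (hA k) i) hk.le⟩
  have h0ev : ∀ i, hA0.1.eigenvalues i ∈ Set.Icc (0:ℝ) R :=
    fun i => ⟨hA0.eigenvalues_nonneg i, le_trans (eig_le_trace hA0 i) (by linarith)⟩
  rw [Metric.tendsto_nhds]
  intro ε hε
  set M : ℕ := Fintype.card m with hM
  set ε' : ℝ := ε / (3 * (M + 1)) with hε'
  have hε'pos : 0 < ε' := by positivity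
  obtain ⟨p, hp⟩ := exists_polynomial_near_of_continuousOn 0 R f hfc.continuousOn ε' hε'pos
  set G : Matrix m m ℂ → ℝ :=
    fun B => ∑ k ∈ Finset.range (p.natDegree + 1), p.coeff k * ((B ^ k).trace).re with hG
  have hGc : Continuous G := by
    refine continuous_finset_sum _ (fun k _ => Continuous.mul continuous_const ?_)
    exact Complex.continuous_re.comp ((continuous_pow k).matrix_trace)
  have hGeig : ∀ (B : Matrix m m ℂ) (hB : B.IsHermitian),
      G B = ∑ i, p.eval (hB.eigenvalues i) := by
    intro B hB
    rw [hG]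
    simp only [re_trace_pow_eig hB, Finset.mul_sum]
    rw [Finset.sum_comm]
    congr 1
    ext i
    rw [Polynomial.eval_eq_sum_range]
  have happrox : ∀ (B : Matrix m m ℂ) (hB : B.PosSemidef),
      (∀ i, hB.1.eigenvalues i ∈ Set.Icc (0:ℝ) R) →
      |((mpow B q).trace).re - G B| ≤ M * ε' := by
    intro B hB hBe
    rw [re_trace_mpow hB.1, hGeig B hB.1, ← Finset.sum_sub_distrib]
    calc |∑ i, ((hB.1.eigenvalues i) ^ q - p.eval (hB.1.eigenvalues i))|
        ≤ ∑ i, |(hB.1.eigenvalues i) ^ q - p.eval (hB.1.eigenvalues i)| :=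
          Finset.abs_sum_le_sum_abs _ _
      _ ≤ ∑ _i : m, ε' := by
          refine Finset.sum_le_sum (fun i _ => ?_)
          rw [abs_sub_comm]
          exact (hp _ (hBe i)).le
      _ = M * ε' := by rw [Finset.sum_const]; simp [hM, mul_comm]
  have hGconv : Tendsto (fun k => G (A k)) atTop (nhds (G A0)) :=
    (hGc.tendsto A0).comp h
  have hMε : (M : ℝ) * ε' ≤ ε / 3 := by
    rw [hε']
    have hM1 : (0:ℝ) < 3 * ((M:ℝ) + 1) := by positivity
    rw [mul_div_assoc', div_le_div_iff₀ hM1 (by norm_num : (0:ℝ) < 3)]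
    nlinarith [hε.le, Nat.cast_nonneg (α := ℝ) M]
  filter_upwards [hev, hGconv.eventually (Metric.ball_mem_nhds (G A0) (by positivity : (0:ℝ) < ε/3))]
    with k hk1 hk2
  have h1 : |((mpow (A k) q).trace).re - G (A k)| ≤ ε / 3 :=
    le_trans (happrox _ (hA k) hk1) hMε
  have h3 : |G A0 - ((mpow A0 q).trace).re| ≤ ε / 3 := by
    rw [abs_sub_comm]
    exact le_trans (happrox _ hA0 h0ev) hMε
  have h2 : |G (A k) - G A0| < ε / 3 := by
    have := hk2
    simpa [Real.dist_eq] using this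
  rw [Real.dist_eq]
  calc |((mpow (A k) q).trace).re - ((mpow A0 q).trace).re|
      ≤ |((mpow (A k) q).trace).re - G (A k)| + |G (A k) - G A0| + |G A0 - ((mpow A0 q).trace).re| := by
        nlinarith [abs_sub_le ((mpow (A k) q).trace).re (G (A k)) ((mpow A0 q).trace).re,
          abs_sub_le (G (A k)) (G A0) ((mpow A0 q).trace).re]
    _ < ε := by linarith

lemma re_trace_mpow_nonneg {A : Matrix m m ℂ} (hA : A.PosSemidef) (q : ℝ) :
    0 ≤ ((mpow A q).trace).re := by
  rw [re_trace_mpow hA.1]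
  exact Finset.sum_nonneg fun i _ => Real.rpow_nonneg (hA.eigenvalues_nonneg i) q

lemma schattenNorm_nonneg (p : ℝ) (Y : Matrix m m ℂ) : 0 ≤ schattenNorm p Y :=
  Real.rpow_nonneg (re_trace_mpow_nonneg (Matrix.posSemidef_conjTranspose_mul_self Y) _) _

lemma tendsto_schattenNorm {N : ℕ → Matrix m m ℂ} {N0 : Matrix m m ℂ}
    (h : Tendsto N atTop (nhds N0)) {p : ℝ} (hp : 0 < p) :
    Tendsto (fun k => schattenNorm p (N k)) atTop (nhds (schattenNorm p N0)) := by
  have hc : Continuous fun B : Matrix m m ℂ => Bᴴ * B :=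
    (continuous_id.matrix_conjTranspose).matrix_mul continuous_id
  have hconv : Tendsto (fun k => (N k)ᴴ * (N k)) atTop (nhds (N0ᴴ * N0)) :=
    (hc.tendsto N0).comp h
  have htr := tendsto_re_trace_mpow
    (fun k => Matrix.posSemidef_conjTranspose_mul_self (N k))
    (Matrix.posSemidef_conjTranspose_mul_self N0) hconv (by positivity : 0 < p / 2)
  have hrpow : ContinuousAt (fun x : ℝ => x ^ (1/p))
      (((mpow (N0ᴴ * N0) (p/2)).trace).re) :=
    Real.continuousAt_rpow_const _ _ (Or.inr (by positivity))
  exact (hrpow.tendsto).comp htr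

lemma cfc_affine {σ : Matrix m m ℂ} (hσ : σ.IsHermitian) (c e : ℝ) :
    cfc (fun x : ℝ => c * x + e) σ = (c : ℂ) • σ + (e : ℂ) • 1 := by
  rw [hσ.cfc_eq, Matrix.IsHermitian.cfc]
  have hd : Matrix.diagonal (RCLike.ofReal ∘ (fun x : ℝ => c * x + e) ∘ hσ.eigenvalues)
      = (c : ℂ) • Matrix.diagonal (RCLike.ofReal ∘ hσ.eigenvalues) + (e : ℂ) • (1 : Matrix m m ℂ) := by
    ext i j
    by_cases h : i = j
    · subst h
      simp only [Matrix.add_apply, Matrix.smul_apply, Matrix.diagonal_apply_eq,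
        Matrix.one_apply_eq, Function.comp_apply, smul_eq_mul]
      rw [show (RCLike.ofReal : ℝ → ℂ) = Complex.ofReal from rfl]
      push_cast
      ring
    · simp [Matrix.diagonal_apply_ne _ h, Matrix.one_apply_ne h]
  rw [hd, Unitary.conjStarAlgAut_apply, Matrix.mul_add, Matrix.add_mul, Matrix.mul_smul, Matrix.smul_mul,
    Matrix.mul_smul, Matrix.smul_mul, Matrix.mul_one]
  rw [show ((Matrix.IsHermitian.eigenvectorUnitary hσ : Matrix m m ℂ)) *
      (star (Matrix.IsHermitian.eigenvectorUnitary hσ : Matrix m m ℂ)) = 1 from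
    Unitary.coe_mul_star_self _]
  congr 1
  conv_rhs => rw [hσ.spectral_theorem, Unitary.conjStarAlgAut_apply]

lemma mpow_cfc_comp {σ : Matrix m m ℂ} (hσ : σ.IsHermitian) (f : ℝ → ℝ) (t : ℝ) :
    mpow (cfc f σ) t = cfc (fun x : ℝ => (f x) ^ t) σ := by
  have ha : IsSelfAdjoint σ := hσ
  rw [mpow, ← cfc_comp (fun x : ℝ => x ^ t) f σ ha
    (((Matrix.finite_real_spectrum (A := σ)).image f).continuousOn _)
    ((Matrix.finite_real_spectrum (A := σ)).continuousOn _)]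
  rfl

lemma mulVec_eq_zero_of_supp {X σ : Matrix m m ℂ} (hX : X.IsHermitian) (hσ : σ.IsHermitian)
    (hsupp : LinearMap.range (Matrix.toLin' X) ≤ LinearMap.range (Matrix.toLin' σ))
    {w : m → ℂ} (hw : σ *ᵥ w = 0) : X *ᵥ w = 0 := by
  have hvm : star w ᵥ* σ = 0 := by
    have h1 : star (σᴴ *ᵥ w) = star w ᵥ* σᴴᴴ := Matrix.star_mulVec σᴴ w
    rw [Matrix.conjTranspose_conjTranspose, hσ.eq, hw] at h1
    simpa using h1.symm
  have hvmX : star w ᵥ* X = star (X *ᵥ w) := by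
    have h1 : star (Xᴴ *ᵥ w) = star w ᵥ* Xᴴᴴ := Matrix.star_mulVec Xᴴ w
    rw [Matrix.conjTranspose_conjTranspose, hX.eq] at h1
    exact h1.symm
  have key : ∀ v, star w ⬝ᵥ (X *ᵥ v) = 0 := by
    intro v
    obtain ⟨u, hu⟩ := hsupp (Set.mem_range_self v : Matrix.toLin' X v ∈ _)
    simp only [Matrix.toLin'_apply] at hu
    rw [show X *ᵥ v = σ *ᵥ u from hu.symm]
    rw [Matrix.dotProduct_mulVec, hvm, zero_dotProduct]
  have h2 : star (X *ᵥ w) ⬝ᵥ (X *ᵥ w) = 0 := by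
    rw [← hvmX, ← Matrix.dotProduct_mulVec]
    exact key _
  exact (dotProduct_star_self_eq_zero).mp h2

lemma posSemidef_real_smul {M : Matrix m m ℂ} (h : M.PosSemidef) {c : ℝ} (hc : 0 ≤ c) :
    (((c : ℂ)) • M).PosSemidef := by
  rw [Matrix.posSemidef_iff_dotProduct_mulVec]
  constructor
  · unfold Matrix.IsHermitian
    rw [Matrix.conjTranspose_smul, h.1.eq]
    congr 1
    simp
  · intro x
    rw [Matrix.smul_mulVec, dotProduct_smul, smul_eq_mul]
    exact mul_nonneg (Complex.zero_le_real.mpr hc) (h.dotProduct_mulVec_nonneg x)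

lemma posDef_real_smul {M : Matrix m m ℂ} (h : M.PosDef) {c : ℝ} (hc : 0 < c) :
    (((c : ℂ)) • M).PosDef := by
  rw [Matrix.posDef_iff_dotProduct_mulVec]
  constructor
  · unfold Matrix.IsHermitian
    rw [Matrix.conjTranspose_smul, h.1.eq]
    congr 1
    simp
  · intro x hx
    rw [Matrix.smul_mulVec, dotProduct_smul, smul_eq_mul]
    exact mul_pos (Complex.zero_lt_real.mpr hc) (h.dotProduct_mulVec_pos hx)

lemma range_eq_top_of_posDef {σ : Matrix m m ℂ} (h : σ.PosDef) :
    LinearMap.range (Matrix.toLin' σ) = ⊤ := by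
  rw [LinearMap.range_eq_top]
  intro v
  refine ⟨σ⁻¹ *ᵥ v, ?_⟩
  rw [Matrix.toLin'_apply, Matrix.mulVec_mulVec,
    Matrix.mul_nonsing_inv σ ((Matrix.isUnit_iff_isUnit_det σ).mp h.isUnit), Matrix.one_mulVec]

end AuxLemmas

section PtransposeLemmas

variable {a b : Type*} [Fintype a] [Fintype b] [DecidableEq a] [DecidableEq b]

lemma ptranspose_add (A B : Matrix (a × b) (a × b) ℂ) :
    ptranspose (A + B) = ptranspose A + ptranspose B := rfl

lemma ptranspose_smul (c : ℂ) (A : Matrix (a × b) (a × b) ℂ) :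
    ptranspose (c • A) = c • ptranspose A := rfl

lemma ptranspose_one : ptranspose (1 : Matrix (a × b) (a × b) ℂ) = 1 := by
  ext ⟨x1, x2⟩ ⟨y1, y2⟩
  simp only [ptranspose, Matrix.one_apply, Prod.mk.injEq]
  by_cases h : x1 = y1 ∧ x2 = y2
  · simp [h.1, h.2]
  · rw [if_neg, if_neg]
    · intro hc; exact h ⟨hc.1, hc.2⟩
    · intro hc; exact h ⟨hc.1, hc.2.symm⟩

lemma ptranspose_isHermitian {ρ : Matrix (a × b) (a × b) ℂ} (hρ : ρ.IsHermitian) :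
    (ptranspose ρ).IsHermitian := by
  ext ⟨x1, x2⟩ ⟨y1, y2⟩
  simp only [Matrix.conjTranspose_apply, ptranspose]
  exact congrFun (congrFun hρ _) _ |>.symm ▸ (by
    have := Matrix.IsHermitian.apply hρ (x1, y2) (y1, x2)
    simpa [ptranspose] using this)

end PtransposeLemmas

/-- the infimum over PPT states equals the infimum over faithful PPT states. -/
theorem ENalpha_eq_iInf_faithful {a b : Type*}
    [Fintype a] [Fintype b] [DecidableEq a] [DecidableEq b]
    (ρ : Matrix (a × b) (a × b) ℂ) (hρ : ρ.PosSemidef) (hρtr : ρ.trace = 1)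
    (α : ℝ) (hα : 1 ≤ α) :
    ENalpha α ρ =
      ⨅ σ : {σ : Matrix (a × b) (a × b) ℂ //
          σ.PosDef ∧ (ptranspose σ).PosDef ∧ σ.trace = 1},
        nuAlpha α (ptranspose ρ) σ.1 := by
  classical
  have hXh : (ptranspose ρ).IsHermitian := ptranspose_isHermitian hρ.1
  set X : Matrix (a × b) (a × b) ℂ := ptranspose ρ with hXdef
  refine le_antisymm ?_ ?_
  · refine le_iInf fun σ' => ?_
    exact iInf_le_of_le ⟨σ'.1, σ'.2.1.posSemidef, σ'.2.2.1.posSemidef, σ'.2.2.2⟩ le_rfl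
  · unfold ENalpha
    refine le_iInf fun σp => ?_
    obtain ⟨σ, hσPSD, hσPT, hσtr⟩ := σp
    simp only
    by_cases hsupp : LinearMap.range (Matrix.toLin' X) ≤ LinearMap.range (Matrix.toLin' σ)
    swap
    · rw [nuAlpha, if_neg hsupp]
      exact le_top
    rw [nuAlpha, if_pos hsupp]
    -- nonemptiness
    have hne : Nonempty (a × b) := by
      by_contra hc
      have he : IsEmpty (a × b) := not_nonempty_iff.mp hc
      rw [Matrix.trace, Finset.univ_eq_empty, Finset.sum_empty] at hσtr
      exact one_ne_zero hσtr.symm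
    set d : ℕ := Fintype.card (a × b) with hdd
    have hd : 0 < d := Fintype.card_pos
    have hdC : ((d : ℂ)) ≠ 0 := Nat.cast_ne_zero.mpr hd.ne'
    -- the approximating sequence
    set εf : ℕ → ℝ := fun k => 1 / (k + 2) with hεf
    have hεpos : ∀ k, 0 < εf k := fun k => by positivity
    have hεlt : ∀ k, εf k < 1 := by
      intro k
      rw [hεf]
      rw [div_lt_one (by positivity)]
      have : (0:ℝ) ≤ (k:ℝ) := Nat.cast_nonneg k
      linarith
    have hεto : Filter.Tendsto εf Filter.atTop (nhds 0) := by
      have h1 : Filter.Tendsto (fun k : ℕ => (1 : ℝ) / (k + 1)) Filter.atTop (nhds 0) :=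
        tendsto_one_div_add_atTop_nhds_zero_nat
      have h2 := h1.comp (Filter.tendsto_add_atTop_nat 1)
      refine h2.congr fun k => ?_
      simp only [hεf, Function.comp]
      push_cast
      ring
    set t : ℝ := (1 - α) / (2 * α) with ht
    set σε : ℕ → Matrix (a × b) (a × b) ℂ :=
      fun k => ((1 - εf k : ℝ) : ℂ) • σ + ((εf k / d : ℝ) : ℂ) • 1 with hσε
    have hPD : ∀ k, (σε k).PosDef := by
      intro k
      exact Matrix.PosDef.posSemidef_add
        (posSemidef_real_smul hσPSD (by linarith [hεlt k]))
        (posDef_real_smul Matrix.PosDef.one (by positivity))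
    have hptσε : ∀ k, ptranspose (σε k)
        = ((1 - εf k : ℝ) : ℂ) • ptranspose σ + ((εf k / d : ℝ) : ℂ) • 1 := by
      intro k
      rw [hσε]
      simp only [ptranspose_add, ptranspose_smul, ptranspose_one]
    have hPT : ∀ k, (ptranspose (σε k)).PosDef := by
      intro k
      rw [hptσε k]
      exact Matrix.PosDef.posSemidef_add
        (posSemidef_real_smul hσPT (by linarith [hεlt k]))
        (posDef_real_smul Matrix.PosDef.one (by positivity))
    have htrε : ∀ k, (σε k).trace = 1 := by
      intro k
      rw [hσε]
      simp only [Matrix.trace_add, Matrix.trace_smul, hσtr, Matrix.trace_one, smul_eq_mul]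
      push_cast
      field_simp
      simp only [hdd, Fintype.card_prod]
      push_cast
      ring
    -- spectral data of σ
    set hσh : σ.IsHermitian := hσPSD.1 with hσhdef
    set V : Matrix (a × b) (a × b) ℂ := (hσh.eigenvectorUnitary : Matrix (a × b) (a × b) ℂ)
      with hV
    set lam : (a × b) → ℝ := hσh.eigenvalues with hlam
    set X' : Matrix (a × b) (a × b) ℂ := star V * X * V with hX'
    have hXcol : ∀ j, lam j = 0 → ∀ i, X' i j = 0 := by
      intro j hj i
      have hwV : (fun l => V l j) = ⇑(hσh.eigenvectorBasis j) := by
        funext l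
        exact Matrix.IsHermitian.eigenvectorUnitary_apply hσh l j
      have hw : σ *ᵥ ⇑(hσh.eigenvectorBasis j) = 0 := by
        rw [hσh.mulVec_eigenvectorBasis]
        rw [show hσh.eigenvalues j = lam j from rfl, hj]
        simp
      have hXw : X *ᵥ ⇑(hσh.eigenvectorBasis j) = 0 :=
        mulVec_eq_zero_of_supp hXh hσh hsupp hw
      have hcolXV : ∀ k, (X * V) k j = 0 := by
        intro k
        have : (X * V) k j = (X *ᵥ ⇑(hσh.eigenvectorBasis j)) k := by
          rw [Matrix.mul_apply, Matrix.mulVec, dotProduct]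
          refine Finset.sum_congr rfl fun l _ => ?_
          rw [← hwV]
        rw [this, hXw]
        rfl
      rw [hX', Matrix.mul_assoc, Matrix.mul_apply]
      refine Finset.sum_eq_zero fun k _ => ?_
      rw [hcolXV k, mul_zero]
    have hX'h : X'.IsHermitian := by
      rw [hX']
      unfold Matrix.IsHermitian
      simp only [Matrix.conjTranspose_mul, Matrix.conjTranspose_conjTranspose,
        Matrix.star_eq_conjTranspose, hXh.eq, Matrix.mul_assoc]
    have hzero : ∀ i j, (lam i = 0 ∨ lam j = 0) → X' i j = 0 := by
      intro i j hij
      rcases hij with hi | hj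
      · have h0 : X' j i = 0 := hXcol i hi j
        have : X' i j = star (X' j i) := by
          conv_lhs => rw [← hX'h.eq]
          rw [Matrix.conjTranspose_apply]
        rw [this, h0, star_zero]
      · exact hXcol j hj i
    -- functional calculus representations
    have hself : IsSelfAdjoint σ := hσh
    set g : ℕ → ℝ → ℝ := fun k x => ((1 - εf k) * x + εf k / d) ^ t with hg
    have hσεcfc : ∀ k, σε k = cfc (fun x : ℝ => (1 - εf k) * x + εf k / d) σ := by
      intro k
      rw [cfc_affine hσh]
    have hmpowε : ∀ k, mpow (σε k) t = hσh.cfc (g k) := by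
      intro k
      rw [hσεcfc k, mpow_cfc_comp hσh, Matrix.IsHermitian.cfc_eq]
    have hmpow0 : mpow σ t = hσh.cfc (fun x : ℝ => x ^ t) := by
      rw [mpow, Matrix.IsHermitian.cfc_eq]
    set Dg : (ℝ → ℝ) → Matrix (a × b) (a × b) ℂ :=
      fun f => Matrix.diagonal (RCLike.ofReal ∘ f ∘ lam) with hDg
    have hcfcD : ∀ f : ℝ → ℝ, hσh.cfc f = V * Dg f * star V := by
      intro f
      rw [Matrix.IsHermitian.cfc, Unitary.conjStarAlgAut_apply]
    have sandwich : ∀ f h : ℝ → ℝ,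
        (V * Dg f * star V) * X * (V * Dg h * star V) = V * (Dg f * X' * Dg h) * star V := by
      intro f h
      rw [hX']
      simp only [Matrix.mul_assoc]
    set W : ℕ → Matrix (a × b) (a × b) ℂ := fun k => Dg (g k) * X' * Dg (g k) with hW
    set W0 : Matrix (a × b) (a × b) ℂ := Dg (fun x => x ^ t) * X' * Dg (fun x => x ^ t) with hW0
    have hWentry : ∀ (f : ℝ → ℝ) i j,
        (Dg f * X' * Dg f) i j = (f (lam i) : ℂ) * X' i j * (f (lam j) : ℂ) := by
      intro f i j
      rw [Matrix.mul_diagonal, Matrix.diagonal_mul]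
      rfl
    have hbase : ∀ y : ℝ, y ≠ 0 →
        Filter.Tendsto (fun k => g k y) Filter.atTop (nhds (y ^ t)) := by
      intro y hy
      have hb : Filter.Tendsto (fun k => (1 - εf k) * y + εf k / d)
          Filter.atTop (nhds ((1 - 0) * y + 0 / (d : ℝ))) :=
        ((tendsto_const_nhds.sub hεto).mul tendsto_const_nhds).add (hεto.div_const _)
      have hb' : Filter.Tendsto (fun k => (1 - εf k) * y + εf k / d)
          Filter.atTop (nhds y) := by
        convert hb using 2
        norm_num
      exact ((Real.continuousAt_rpow_const y t (Or.inl hy)).tendsto).comp hb'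
    have hWconv : Filter.Tendsto W Filter.atTop (nhds W0) := by
      refine tendsto_pi_nhds.mpr ?_
      intro i
      rw [tendsto_pi_nhds]
      intro j
      have hrw : ∀ k, W k i j = ((g k (lam i) : ℝ) : ℂ) * X' i j * ((g k (lam j) : ℝ) : ℂ) := by
        intro k
        rw [hW]
        exact hWentry (g k) i j
      have hrw0 : W0 i j = ((lam i ^ t : ℝ) : ℂ) * X' i j * ((lam j ^ t : ℝ) : ℂ) := by
        rw [hW0]
        exact hWentry _ i j
      simp only [hrw, hrw0]
      by_cases hx : X' i j = 0
      · simp only [hx, mul_zero, zero_mul]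
        exact tendsto_const_nhds
      · have hi : lam i ≠ 0 := fun h => hx (hzero i j (Or.inl h))
        have hj : lam j ≠ 0 := fun h => hx (hzero i j (Or.inr h))
        have h1 : Filter.Tendsto (fun k => ((g k (lam i) : ℝ) : ℂ))
            Filter.atTop (nhds ((lam i ^ t : ℝ) : ℂ)) :=
          (Complex.continuous_ofReal.tendsto _).comp (hbase _ hi)
        have h2 : Filter.Tendsto (fun k => ((g k (lam j) : ℝ) : ℂ))
            Filter.atTop (nhds ((lam j ^ t : ℝ) : ℂ)) :=
          (Complex.continuous_ofReal.tendsto _).comp (hbase _ hj)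
        exact (h1.mul tendsto_const_nhds).mul h2
    have hNrw : ∀ k, mpow (σε k) t * X * mpow (σε k) t = V * W k * star V := by
      intro k
      rw [hmpowε k, hcfcD, hW, sandwich]
    have hNrw0 : mpow σ t * X * mpow σ t = V * W0 * star V := by
      rw [hmpow0, hcfcD, hW0, sandwich]
    have hNconv : Filter.Tendsto (fun k => mpow (σε k) t * X * mpow (σε k) t)
        Filter.atTop (nhds (mpow σ t * X * mpow σ t)) := by
      simp only [hNrw, hNrw0]
      have hc : Continuous fun B : Matrix (a × b) (a × b) ℂ => V * B * star V :=
        (continuous_const.matrix_mul continuous_id).matrix_mul continuous_const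
      exact (hc.tendsto W0).comp hWconv
    have hαpos : (0 : ℝ) < α := lt_of_lt_of_le one_pos hα
    have hμconv : Filter.Tendsto (fun k => muAlpha α X (σε k))
        Filter.atTop (nhds (muAlpha α X σ)) := by
      unfold muAlpha
      exact tendsto_schattenNorm hNconv hαpos
    -- faithful subtype elements
    set el : ℕ → {σ' : Matrix (a × b) (a × b) ℂ //
        σ'.PosDef ∧ (ptranspose σ').PosDef ∧ σ'.trace = 1} :=
      fun k => ⟨σε k, hPD k, hPT k, htrε k⟩ with hel
    have hval : ∀ k, nuAlpha α X (σε k) = ((Real.logb 2 (muAlpha α X (σε k)) : ℝ) : EReal) := by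
      intro k
      rw [nuAlpha, if_pos]
      rw [range_eq_top_of_posDef (hPD k)]
      exact le_top
    -- key approximation step
    have hkey : ∀ δ : ℝ, 0 < δ → ∃ k,
        Real.logb 2 (muAlpha α X (σε k)) ≤ Real.logb 2 (muAlpha α X σ) + δ := by
      intro δ hδ
      by_cases hμ0 : 0 < muAlpha α X σ
      · have hlogconv : Filter.Tendsto (fun k => Real.logb 2 (muAlpha α X (σε k)))
            Filter.atTop (nhds (Real.logb 2 (muAlpha α X σ))) := by
          simp only [Real.logb]
          exact (((Real.continuousAt_log hμ0.ne').tendsto).comp hμconv).div_const _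
        exact (hlogconv.eventually
          (eventually_le_nhds (lt_add_of_pos_right _ hδ))).exists
      · have hμeq : muAlpha α X σ = 0 :=
          le_antisymm (not_lt.mp hμ0) (schattenNorm_nonneg _ _)
        have hev : ∀ᶠ k in Filter.atTop, muAlpha α X (σε k) < 1 := by
          refine hμconv.eventually (eventually_lt_nhds ?_)
          rw [hμeq]; norm_num
        obtain ⟨k, hk⟩ := hev.exists
        refine ⟨k, ?_⟩
        have h1 : Real.logb 2 (muAlpha α X (σε k)) ≤ 0 :=
          Real.logb_nonpos (by norm_num) (schattenNorm_nonneg _ _) hk.le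
        rw [hμeq, Real.logb_zero]
        linarith
    -- conclude via EReal
    by_contra hcon
    rw [not_le] at hcon
    obtain ⟨x, hx1, hx2⟩ := EReal.lt_iff_exists_real_btwn.mp hcon
    have hrx : Real.logb 2 (muAlpha α X σ) < x := by exact_mod_cast hx1
    obtain ⟨k, hk⟩ := hkey (x - Real.logb 2 (muAlpha α X σ)) (by linarith)
    have hle : (⨅ σ' : {σ' : Matrix (a × b) (a × b) ℂ //
        σ'.PosDef ∧ (ptranspose σ').PosDef ∧ σ'.trace = 1},
        nuAlpha α X σ'.1) ≤ nuAlpha α X (σε k) := iInf_le _ (el k)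
    rw [hval k] at hle
    have : nuAlpha α X (σε k) = ((Real.logb 2 (muAlpha α X (σε k)) : ℝ) : EReal) := hval k
    have hxE : ((Real.logb 2 (muAlpha α X (σε k)) : ℝ) : EReal) ≤ ((x : ℝ) : EReal) := by
      exact_mod_cast (by linarith : Real.logb 2 (muAlpha α X (σε k)) ≤ x)
    exact absurd (lt_of_le_of_lt (le_trans hle hxE) hx2) (lt_irrefl _)

end
end

section
/- For a maximally entangled state Φ^d of Schmidt rank d ≥ 2, the α-logarithmic negativity equals log₂ d for every α ≥ 1: E_N^α(Φ^d_AB) = log₂ d. -/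
open scoped Classical
open Matrix ComplexOrder

noncomputable section

variable {n : Type*} [Fintype n] [DecidableEq n]

/-! ### Auxiliary lemmas -/

section Aux
open Real

lemma aux_cfc_isHermitian (A : Matrix n n ℂ) (f : ℝ → ℝ) :
    (cfc f A).IsHermitian := by
  have h : IsSelfAdjoint (cfc f A) := cfc_predicate f A
  exact h

lemma aux_trace_cfc {A : Matrix n n ℂ} (hA : A.IsHermitian) (f : ℝ → ℝ) :
    (cfc f A).trace = ∑ i, (f (hA.eigenvalues i) : ℂ) := by
  rw [hA.cfc_eq]
  unfold Matrix.IsHermitian.cfc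
  rw [Unitary.conjStarAlgAut_apply, Matrix.trace_mul_cycle, Unitary.star_mul_self_of_mem (SetLike.coe_mem _),
    one_mul, trace_diagonal]
  simp

lemma aux_det_cfc {A : Matrix n n ℂ} (hA : A.IsHermitian) (f : ℝ → ℝ) :
    (cfc f A).det = ∏ i, (f (hA.eigenvalues i) : ℂ) := by
  rw [hA.cfc_eq]
  unfold Matrix.IsHermitian.cfc
  rw [Unitary.conjStarAlgAut_apply, det_mul, det_mul, mul_comm, ← mul_assoc, ← det_mul,
    Unitary.star_mul_self_of_mem (SetLike.coe_mem _), det_one, one_mul, det_diagonal]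
  simp

lemma aux_sum_rpow_ge {ι : Type*} [Fintype ι] [Nonempty ι] (mu : ι → ℝ) (hmu : ∀ i, 0 ≤ mu i)
    (e : ℝ) : (Fintype.card ι : ℝ) * (∏ i, mu i) ^ (e * (Fintype.card ι : ℝ)⁻¹) ≤
      ∑ i, mu i ^ e := by
  have hC : (0:ℝ) < (Fintype.card ι : ℝ) := by exact_mod_cast Fintype.card_pos
  have hw : ∑ _i : ι, (Fintype.card ι : ℝ)⁻¹ = 1 := by
    rw [Finset.sum_const, Finset.card_univ, nsmul_eq_mul, mul_inv_cancel₀ hC.ne']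
  have hgm := Real.geom_mean_le_arith_mean_weighted Finset.univ
    (fun _ => (Fintype.card ι : ℝ)⁻¹) (fun i => mu i ^ e)
    (fun i _ => by positivity) hw (fun i _ => Real.rpow_nonneg (hmu i) e)
  have key : (∏ i, mu i) ^ (e * (Fintype.card ι : ℝ)⁻¹)
      = ∏ i, (mu i ^ e) ^ ((Fintype.card ι : ℝ)⁻¹) := by
    rw [Real.rpow_mul (Finset.prod_nonneg (fun i _ => hmu i)),
      ← Real.finset_prod_rpow _ _ (fun i _ => hmu i) e,
      ← Real.finset_prod_rpow _ _ (fun i _ => Real.rpow_nonneg (hmu i) e) _]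
  calc (Fintype.card ι : ℝ) * (∏ i, mu i) ^ (e * (Fintype.card ι : ℝ)⁻¹)
      = (∏ i, (mu i ^ e) ^ ((Fintype.card ι : ℝ)⁻¹)) * (Fintype.card ι : ℝ) := by
        rw [key]; ring
    _ ≤ (∑ i, (Fintype.card ι : ℝ)⁻¹ * (mu i ^ e)) * (Fintype.card ι : ℝ) :=
        mul_le_mul_of_nonneg_right hgm hC.le
    _ = ∑ i, mu i ^ e := by
        rw [← Finset.mul_sum]; field_simp

lemma aux_prod_rpow_le {ι : Type*} [Fintype ι] [Nonempty ι] (lam : ι → ℝ) (h : ∀ i, 0 ≤ lam i)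
    (hsum : ∑ i, lam i = 1) :
    (∏ i, lam i) ^ ((Fintype.card ι : ℝ)⁻¹) ≤ (Fintype.card ι : ℝ)⁻¹ := by
  have hC : (0:ℝ) < (Fintype.card ι : ℝ) := by exact_mod_cast Fintype.card_pos
  have hw : ∑ _i : ι, (Fintype.card ι : ℝ)⁻¹ = 1 := by
    rw [Finset.sum_const, Finset.card_univ, nsmul_eq_mul, mul_inv_cancel₀ hC.ne']
  have hgm := Real.geom_mean_le_arith_mean_weighted Finset.univ
    (fun _ => (Fintype.card ι : ℝ)⁻¹) lam (fun i _ => by positivity) hw (fun i _ => h i)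
  calc (∏ i, lam i) ^ ((Fintype.card ι : ℝ)⁻¹)
      = ∏ i, lam i ^ ((Fintype.card ι : ℝ)⁻¹) :=
        (Real.finset_prod_rpow _ _ (fun i _ => h i) _).symm
    _ ≤ ∑ i, (Fintype.card ι : ℝ)⁻¹ * lam i := hgm
    _ = (Fintype.card ι : ℝ)⁻¹ := by rw [← Finset.mul_sum, hsum, mul_one]

lemma aux_final_real {α dR t S : ℝ} (hα : 1 ≤ α) (hdR : 2 ≤ dR) (htpos : 0 < t)
    (ht1 : t ^ (dR ^ (2:ℝ))⁻¹ ≤ (dR ^ (2:ℝ))⁻¹)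
    (hS : dR ^ (2:ℝ) * (t ^ (4 * ((1 - α) / (2 * α))) * dR ^ (-(2 * dR ^ (2:ℝ)))) ^
        ((α / 2) * (dR ^ (2:ℝ))⁻¹) ≤ S) :
    dR ^ α ≤ S := by
  have hdpos : (0:ℝ) < dR := by linarith
  have hαpos : (0:ℝ) < α := by linarith
  set C : ℝ := dR ^ (2:ℝ) with hC
  have hCpos : 0 < C := rpow_pos_of_pos hdpos 2
  have h1 : (t ^ (4 * ((1 - α) / (2 * α))) * dR ^ (-(2 * C))) ^ ((α / 2) * C⁻¹)
      = t ^ ((1 - α) * C⁻¹) * dR ^ (-α) := by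
    rw [Real.mul_rpow (rpow_nonneg htpos.le _) (rpow_nonneg hdpos.le _),
      ← Real.rpow_mul htpos.le, ← Real.rpow_mul hdpos.le]
    congr 1
    · congr 1; field_simp; ring
    · congr 1; field_simp
  have h2 : t ^ ((1 - α) * C⁻¹) = (t ^ C⁻¹) ^ (1 - α) := by
    rw [← Real.rpow_mul htpos.le, mul_comm]
  have h3 : (C⁻¹) ^ (1 - α) ≤ (t ^ C⁻¹) ^ (1 - α) :=
    rpow_le_rpow_of_nonpos (rpow_pos_of_pos htpos _) ht1 (by linarith)
  have h4 : (C⁻¹) ^ (1 - α) = dR ^ (2 * α - 2) := by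
    rw [hC, ← Real.rpow_neg hdpos.le, ← Real.rpow_mul hdpos.le]
    congr 1; ring
  calc dR ^ α = C * (dR ^ (2 * α - 2) * dR ^ (-α)) := by
        rw [hC, ← Real.rpow_add hdpos, ← Real.rpow_add hdpos]
        congr 1; ring
    _ ≤ C * ((t ^ C⁻¹) ^ (1 - α) * dR ^ (-α)) := by
        refine mul_le_mul_of_nonneg_left (mul_le_mul_of_nonneg_right ?_ (rpow_nonneg hdpos.le _))
          hCpos.le
        rw [← h4]; exact h3
    _ = C * (t ^ ((1 - α) * C⁻¹) * dR ^ (-α)) := by rw [h2]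
    _ = C * (t ^ (4 * ((1 - α) / (2 * α))) * dR ^ (-(2 * C))) ^ ((α / 2) * C⁻¹) := by rw [h1]
    _ ≤ S := hS

lemma aux_final_upper_real {α dR : ℝ} (hα : 1 ≤ α) (hdR : 2 ≤ dR) :
    (dR ^ 2 * ((((dR ^ 2)⁻¹ ^ ((1 - α) / (2 * α))) ^ (4:ℕ) * (dR ^ 2)⁻¹) ^ (α / 2))) ^ (1 / α)
      = dR := by
  have hdpos : (0:ℝ) < dR := by linarith
  have hαpos : (0:ℝ) < α := by linarith
  set c0 : ℝ := (1 - α) / (2 * α) with hc0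
  have e0 : (dR ^ 2)⁻¹ = dR ^ (-2 : ℝ) := by
    rw [Real.rpow_neg hdpos.le, ← Real.rpow_natCast dR 2]
    norm_num
  have e1 : (dR ^ (-2:ℝ)) ^ c0 = dR ^ ((-2) * c0) := (Real.rpow_mul hdpos.le _ _).symm
  have e2 : (dR ^ ((-2) * c0)) ^ (4:ℕ) = dR ^ ((-2) * c0 * 4) := by
    rw [← Real.rpow_natCast (dR ^ ((-2) * c0)) 4, ← Real.rpow_mul hdpos.le]
    norm_num
  have e3 : dR ^ ((-2) * c0 * 4) * dR ^ (-2:ℝ) = dR ^ ((-2) * c0 * 4 + (-2)) :=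
    (Real.rpow_add hdpos _ _).symm
  have e4 : (dR ^ ((-2) * c0 * 4 + (-2))) ^ (α / 2) = dR ^ (((-2) * c0 * 4 + (-2)) * (α / 2)) :=
    (Real.rpow_mul hdpos.le _ _).symm
  have e5 : ((-2) * c0 * 4 + (-2)) * (α / 2) = α - 2 := by
    rw [hc0]; field_simp; ring
  have e6 : dR ^ 2 * dR ^ (α - 2 : ℝ) = dR ^ α := by
    rw [← Real.rpow_natCast dR 2, ← Real.rpow_add hdpos]
    norm_num
  rw [e0, e1, e2, e3, e4, e5, e6, ← Real.rpow_mul hdpos.le, mul_one_div, div_self hαpos.ne',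
    Real.rpow_one]

lemma aux_algebraMap_matrix_eq (r : ℝ) :
    algebraMap ℝ (Matrix n n ℂ) r = (r : ℂ) • (1 : Matrix n n ℂ) := by
  ext i j
  simp only [Matrix.algebraMap_eq_diagonal, Matrix.diagonal_apply, Matrix.smul_apply, one_apply,
    smul_eq_mul]
  by_cases h : i = j
  · subst h; simp
  · simp [h]

lemma aux_posSemidef_real_smul_one {r : ℝ} (hr : 0 ≤ r) :
    ((r : ℂ) • (1 : Matrix n n ℂ)).PosSemidef := by
  constructor
  · show ((r : ℂ) • (1 : Matrix n n ℂ))ᴴ = _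
    rw [conjTranspose_smul, conjTranspose_one]
    congr 1
    simp [Complex.star_def, Complex.conj_ofReal]
  · exact ((Matrix.PosSemidef.one).smul (a := (r : ℂ)) (by exact_mod_cast hr)).2

lemma aux_ptranspose_smul_one {a b : Type*} [DecidableEq a] [DecidableEq b] (c : ℂ) :
    ptranspose (c • (1 : Matrix (a × b) (a × b) ℂ)) = c • 1 := by
  ext x y
  simp only [ptranspose, Matrix.smul_apply, one_apply, smul_eq_mul]
  by_cases h : x = y
  · subst h; simp
  · have h1 : ¬((x.1, y.2) = (y.1, x.2)) := by
      intro hc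
      rw [Prod.mk.injEq] at hc
      exact h (Prod.ext hc.1 hc.2.symm)
    have h2 : ¬(x = y) := h
    simp [h1, h2]

lemma aux_range_top_of_mul_eq_one {A B : Matrix n n ℂ} (h : A * B = 1) :
    LinearMap.range (Matrix.toLin' A) = ⊤ :=
  LinearMap.range_eq_top.mpr fun y =>
    ⟨Matrix.toLin' B y, by rw [← Matrix.toLin'_mul_apply, h, Matrix.toLin'_one, LinearMap.id_apply]⟩

lemma aux_isUnit_of_range_ge {σ : Matrix n n ℂ} (h : ⊤ ≤ LinearMap.range (Matrix.toLin' σ)) :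
    IsUnit σ := by
  rw [Matrix.isUnit_iff_isUnit_det, isUnit_iff_ne_zero]
  intro hdet
  obtain ⟨v, hv, hmv⟩ := (Matrix.exists_mulVec_eq_zero_iff).mpr hdet
  have hsurj : Function.Surjective (Matrix.toLin' σ) := LinearMap.range_eq_top.mp (top_le_iff.mp h)
  have hinj : Function.Injective (Matrix.toLin' σ) :=
    (LinearMap.injective_iff_surjective).mpr hsurj
  apply hv
  have : Matrix.toLin' σ v = Matrix.toLin' σ 0 := by
    rw [Matrix.toLin'_apply, hmv, map_zero]
  exact hinj this

/-- The swap (flip) matrix on `ℂ^d ⊗ ℂ^d`. -/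
noncomputable def swapM (d : ℕ) : Matrix (Fin d × Fin d) (Fin d × Fin d) ℂ :=
  ((Equiv.prodComm (Fin d) (Fin d)).toPEquiv).toMatrix

lemma swapM_mul_self {d : ℕ} : swapM d * swapM d = 1 := by
  rw [swapM, ← PEquiv.toMatrix_trans, ← Equiv.toPEquiv_trans]
  have : (Equiv.prodComm (Fin d) (Fin d)).trans (Equiv.prodComm (Fin d) (Fin d))
      = Equiv.refl _ := by
    ext x <;> simp
  rw [this, Equiv.toPEquiv_refl, PEquiv.toMatrix_refl]

lemma swapM_apply {d : ℕ} (x y : Fin d × Fin d) :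
    swapM d x y = if x.swap = y then 1 else 0 := by
  simp [swapM, PEquiv.toMatrix, Equiv.toPEquiv]

lemma swapM_conjTranspose {d : ℕ} : (swapM d)ᴴ = swapM d := by
  ext x y
  simp only [conjTranspose_apply, swapM_apply]
  by_cases h : x.swap = y
  · have h' : y.swap = x := by rw [← h]; simp
    simp [h, h']
  · have h' : y.swap ≠ x := fun hc => h (by rw [← hc]; simp)
    simp [h, h']

lemma norm_det_swapM {d : ℕ} : ‖(swapM d).det‖ = 1 := by
  have h : (swapM d).det * (swapM d).det = 1 := by
    rw [← det_mul, swapM_mul_self, det_one]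
  have h2 := congrArg norm h
  rw [norm_mul, norm_one] at h2
  nlinarith [norm_nonneg (swapM d).det]

lemma aux_ptranspose_phi {d : ℕ} (Φ : Matrix (Fin d × Fin d) (Fin d × Fin d) ℂ)
    (hΦ : Φ = fun r c => if r.1 = r.2 ∧ c.1 = c.2 then (1 / d : ℂ) else 0) :
    ptranspose Φ = (d : ℂ)⁻¹ • swapM d := by
  subst hΦ
  ext x y
  simp only [ptranspose, Matrix.smul_apply, swapM_apply, smul_eq_mul]
  by_cases h : x.swap = y
  · have h1 : x.1 = y.2 := by rw [← h]; simp
    have h2 : y.1 = x.2 := by rw [← h]; simp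
    simp [h, h1, h2, one_div]
  · have : ¬(x.1 = y.2 ∧ y.1 = x.2) := by
      rintro ⟨h1, h2⟩
      exact h (Prod.ext (by simp [h2]) (by simp [h1]))
    simp [h, this]

lemma key_lower {d : ℕ} (hd : 2 ≤ d) {α : ℝ} (hα : 1 ≤ α)
    {σ : Matrix (Fin d × Fin d) (Fin d × Fin d) ℂ} (hσ : σ.PosSemidef) (htr : σ.trace = 1)
    (hu : IsUnit σ) :
    (d : ℝ) ≤ muAlpha α ((d : ℂ)⁻¹ • swapM d) σ := by
  have hne : Nonempty (Fin d × Fin d) := ⟨(⟨0, by omega⟩, ⟨0, by omega⟩)⟩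
  have hαpos : (0:ℝ) < α := by linarith
  have hdR : (2:ℝ) ≤ (d:ℝ) := by exact_mod_cast hd
  have hdpos : (0:ℝ) < (d:ℝ) := by linarith
  set c0 : ℝ := (1 - α) / (2 * α) with hc0
  have hherm := hσ.1
  set lam := hherm.eigenvalues with hlam
  have hlam_nonneg : ∀ i, 0 ≤ lam i := hσ.eigenvalues_nonneg
  have hdet0 : σ.det ≠ 0 := ((Matrix.isUnit_iff_isUnit_det σ).mp hu).ne_zero
  have hlam_pos : ∀ i, 0 < lam i := by
    intro i
    rcases (hlam_nonneg i).lt_or_eq with h | h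
    · exact h
    exfalso; apply hdet0
    rw [hherm.det_eq_prod_eigenvalues]
    exact Finset.prod_eq_zero (Finset.mem_univ i)
      (by rw [show hherm.eigenvalues i = lam i from rfl, ← h]; simp)
  have hsum : ∑ i, lam i = 1 := by
    have h1 : (cfc (fun x : ℝ => x) σ) = σ := cfc_id ℝ σ hherm.isSelfAdjoint
    have h2 := aux_trace_cfc hherm (fun x => x)
    rw [h1, htr] at h2
    exact_mod_cast h2.symm
  set t := ∏ i, lam i with ht
  have htpos : 0 < t := Finset.prod_pos (fun i _ => hlam_pos i)
  set C : ℝ := (d:ℝ) ^ (2:ℝ) with hCdef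
  have hcard : (Fintype.card (Fin d × Fin d) : ℝ) = C := by
    rw [hCdef, show ((2:ℝ)) = ((2:ℕ):ℝ) by norm_num, Real.rpow_natCast]
    simp [Fintype.card_prod]
    ring
  set X : Matrix (Fin d × Fin d) (Fin d × Fin d) ℂ := (d : ℂ)⁻¹ • swapM d with hX
  set P := mpow σ c0 with hPdef
  have hPherm : P.IsHermitian := aux_cfc_isHermitian σ _
  have hdetP : P.det = ((t ^ c0 : ℝ) : ℂ) := by
    rw [hPdef, mpow, aux_det_cfc hherm]
    rw [show (∏ i, ((lam i ^ c0 : ℝ) : ℂ)) = ((∏ i, lam i ^ c0 : ℝ) : ℂ) by push_cast; rfl]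
    rw [Real.finset_prod_rpow _ _ (fun i _ => (hlam_pos i).le) c0]
  have hdetX : ‖X.det‖ = ((d:ℝ)⁻¹) ^ (Fintype.card (Fin d × Fin d)) := by
    rw [hX, det_smul, norm_mul, norm_pow, norm_inv, Complex.norm_natCast, norm_det_swapM, mul_one]
  set Y := P * X * P with hYdef
  set B := Yᴴ * Y with hBdef
  have hBpsd : B.PosSemidef := posSemidef_conjTranspose_mul_self Y
  have hBherm := hBpsd.1
  set mu := hBherm.eigenvalues with hmu
  have hmu_nonneg : ∀ i, 0 ≤ mu i := hBpsd.eigenvalues_nonneg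
  have hdetY : ‖Y.det‖ = t ^ c0 * ((d:ℝ)⁻¹) ^ (Fintype.card (Fin d × Fin d)) * t ^ c0 := by
    rw [hYdef, det_mul, det_mul, norm_mul, norm_mul, hdetP, hdetX, Complex.norm_real,
      Real.norm_eq_abs, abs_of_nonneg (Real.rpow_nonneg htpos.le c0)]
  have hprodmu : ∏ i, mu i = ‖Y.det‖ ^ 2 := by
    have h1 : B.det = ∏ i, (mu i : ℂ) := hBherm.det_eq_prod_eigenvalues
    have h2 : B.det = ((‖Y.det‖ ^ 2 : ℝ) : ℂ) := by
      rw [hBdef, det_mul, det_conjTranspose, Complex.star_def, mul_comm, Complex.mul_conj,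
        Complex.normSq_eq_norm_sq]
    have h3 : ((∏ i, mu i : ℝ) : ℂ) = ((‖Y.det‖ ^ 2 : ℝ) : ℂ) := by
      rw [← h2, h1]; push_cast; rfl
    exact_mod_cast h3
  have e1 : ((d:ℝ)⁻¹) ^ (Fintype.card (Fin d × Fin d))
      = (d:ℝ) ^ (-((Fintype.card (Fin d × Fin d)):ℝ)) := by
    rw [← Real.rpow_natCast ((d:ℝ)⁻¹) _, Real.inv_rpow hdpos.le, ← Real.rpow_neg hdpos.le]
  have e2 : t ^ (4 * c0) = (t ^ c0) ^ (4:ℕ) := by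
    rw [← Real.rpow_natCast (t ^ c0) 4, ← Real.rpow_mul htpos.le]
    norm_num [mul_comm]
  have e3 : (d:ℝ) ^ (-(2 * C)) = ((d:ℝ) ^ (-C)) ^ (2:ℕ) := by
    rw [← Real.rpow_natCast ((d:ℝ) ^ (-C)) 2, ← Real.rpow_mul hdpos.le]
    congr 1; push_cast; ring
  have hV : ∏ i, mu i = t ^ (4 * c0) * (d:ℝ) ^ (-(2 * C)) := by
    rw [hprodmu, hdetY, e1, hcard, e2, e3]
    ring
  set S : ℝ := ∑ i, mu i ^ (α / 2) with hSdef
  have hS' : C * (t ^ (4 * c0) * (d:ℝ) ^ (-(2 * C))) ^ ((α / 2) * C⁻¹) ≤ S := by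
    have h := aux_sum_rpow_ge mu hmu_nonneg (α / 2)
    rw [hcard, hV] at h
    exact h
  have ht1' : t ^ C⁻¹ ≤ C⁻¹ := by
    have h := aux_prod_rpow_le lam hlam_nonneg hsum
    rw [hcard] at h
    exact h
  have hfinal : (d:ℝ) ^ α ≤ S := aux_final_real hα hdR htpos ht1' hS'
  have htrB : ((mpow B (α / 2)).trace).re = S := by
    rw [mpow, aux_trace_cfc hBherm,
      show (∑ i, ((hBherm.eigenvalues i ^ (α/2) : ℝ) : ℂ)) = ((∑ i, mu i ^ (α/2) : ℝ) : ℂ)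
        by push_cast; rfl, Complex.ofReal_re]
  have hmua : muAlpha α X σ = S ^ (1 / α) := by
    show ((mpow ((P * X * P)ᴴ * (P * X * P)) (α / 2)).trace).re ^ (1 / α) = S ^ (1 / α)
    rw [show (P * X * P)ᴴ * (P * X * P) = B from rfl, htrB]
  rw [hmua]
  calc (d : ℝ) = ((d:ℝ) ^ α) ^ (1 / α) := by
        rw [← Real.rpow_mul hdpos.le, mul_one_div, div_self hαpos.ne', Real.rpow_one]
    _ ≤ S ^ (1 / α) :=
        Real.rpow_le_rpow (Real.rpow_nonneg hdpos.le α) hfinal (by positivity)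

lemma key_upper {d : ℕ} (hd : 2 ≤ d) {α : ℝ} (hα : 1 ≤ α) :
    muAlpha α ((d : ℂ)⁻¹ • swapM d)
      (algebraMap ℝ (Matrix (Fin d × Fin d) (Fin d × Fin d) ℂ) (((d:ℝ) ^ 2)⁻¹)) = d := by
  have hαpos : (0:ℝ) < α := by linarith
  have hdR : (2:ℝ) ≤ (d:ℝ) := by exact_mod_cast hd
  have hdpos : (0:ℝ) < (d:ℝ) := by linarith
  have hdC : (d:ℂ) ≠ 0 := Nat.cast_ne_zero.mpr (by omega)
  set r : ℝ := ((d:ℝ) ^ 2)⁻¹ with hrdef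
  set c0 : ℝ := (1 - α) / (2 * α) with hc0
  set c' : ℝ := r ^ c0 with hc'
  set X : Matrix (Fin d × Fin d) (Fin d × Fin d) ℂ := (d : ℂ)⁻¹ • swapM d with hX
  have hXh : Xᴴ = X := by
    rw [hX, conjTranspose_smul, swapM_conjTranspose]
    congr 1
    simp
  have hXX : X * X = ((r : ℝ) : ℂ) • (1 : Matrix (Fin d × Fin d) (Fin d × Fin d) ℂ) := by
    rw [hX, smul_mul_assoc, mul_smul_comm, smul_smul, swapM_mul_self]
    congr 1
    rw [hrdef]
    push_cast
    ring
  have hmpow1 : mpow (algebraMap ℝ (Matrix (Fin d × Fin d) (Fin d × Fin d) ℂ) r) c0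
      = algebraMap ℝ _ c' := by
    rw [mpow, cfc_algebraMap (R := ℝ) r _]
  have hY0 : algebraMap ℝ (Matrix (Fin d × Fin d) (Fin d × Fin d) ℂ) c' * X
      * algebraMap ℝ (Matrix (Fin d × Fin d) (Fin d × Fin d) ℂ) c'
      = (((c' * c' : ℝ)) : ℂ) • X := by
    rw [aux_algebraMap_matrix_eq, smul_mul_assoc, one_mul, smul_mul_assoc, mul_smul_comm,
      mul_one, smul_smul]
    push_cast
    ring_nf
  have hB0 : ((((c' * c' : ℝ)) : ℂ) • X)ᴴ * ((((c' * c' : ℝ)) : ℂ) • X)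
      = algebraMap ℝ (Matrix (Fin d × Fin d) (Fin d × Fin d) ℂ) (c' ^ (4:ℕ) * r) := by
    rw [conjTranspose_smul, hXh, smul_mul_assoc, mul_smul_comm, smul_smul, hXX, smul_smul,
      aux_algebraMap_matrix_eq]
    congr 1
    rw [Complex.star_def, Complex.conj_ofReal]
    push_cast
    ring
  have hmpow2 : mpow (algebraMap ℝ (Matrix (Fin d × Fin d) (Fin d × Fin d) ℂ) (c' ^ (4:ℕ) * r))
      (α / 2) = algebraMap ℝ _ ((c' ^ (4:ℕ) * r) ^ (α / 2)) := by
    rw [mpow, cfc_algebraMap (R := ℝ) _ _]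
  have htrace : ∀ w : ℝ, ((algebraMap ℝ (Matrix (Fin d × Fin d) (Fin d × Fin d) ℂ) w).trace).re
      = (Fintype.card (Fin d × Fin d) : ℝ) * w := by
    intro w
    rw [aux_algebraMap_matrix_eq, trace_smul, trace_one, smul_eq_mul,
      show ((w:ℂ) * (Fintype.card (Fin d × Fin d) : ℂ))
        = (((Fintype.card (Fin d × Fin d) : ℝ) * w : ℝ) : ℂ) by push_cast; ring,
      Complex.ofReal_re]
  have hmua : muAlpha α X (algebraMap ℝ _ r)
      = ((Fintype.card (Fin d × Fin d) : ℝ) * ((c' ^ (4:ℕ) * r) ^ (α / 2))) ^ (1 / α) := by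
    show ((mpow ((mpow (algebraMap ℝ _ r) c0 * X * mpow (algebraMap ℝ _ r) c0)ᴴ
      * (mpow (algebraMap ℝ _ r) c0 * X * mpow (algebraMap ℝ _ r) c0)) (α / 2)).trace).re
        ^ (1 / α) = _
    rw [hmpow1, hY0, hB0, hmpow2, htrace]
  rw [hmua]
  have hcard : (Fintype.card (Fin d × Fin d) : ℝ) = (d:ℝ) ^ 2 := by
    simp [Fintype.card_prod]
    ring
  rw [hcard, hrdef, hc', hc0]
  exact aux_final_upper_real hα hdR

end Aux

set_option maxHeartbeats 1000000 in
/-- `E_N^α(Φ^d) = log₂ d` for the maximally entangled state of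
Schmidt rank `d ≥ 2`. -/
theorem ENalpha_maximallyEntangled {d : ℕ} (hd : 2 ≤ d) (α : ℝ) (hα : 1 ≤ α)
    (Φ : Matrix (Fin d × Fin d) (Fin d × Fin d) ℂ)
    (hΦ : Φ = fun r c => if r.1 = r.2 ∧ c.1 = c.2 then (1 / d : ℂ) else 0) :
    ENalpha α Φ = ((Real.logb 2 d : ℝ) : EReal) := by
  have hdR : (2:ℝ) ≤ (d:ℝ) := by exact_mod_cast hd
  have hdpos : (0:ℝ) < (d:ℝ) := by linarith
  have hdC : (d:ℂ) ≠ 0 := Nat.cast_ne_zero.mpr (by omega)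
  have hptr : ptranspose Φ = (d : ℂ)⁻¹ • swapM d := aux_ptranspose_phi Φ hΦ
  have hXinv : ((d : ℂ)⁻¹ • swapM d) * ((d:ℂ) • swapM d) = 1 := by
    rw [smul_mul_assoc, mul_smul_comm, smul_smul, swapM_mul_self, inv_mul_cancel₀ hdC, one_smul]
  have hXrange : LinearMap.range (Matrix.toLin' ((d : ℂ)⁻¹ • swapM d)) = ⊤ :=
    aux_range_top_of_mul_eq_one hXinv
  set σ₀ := algebraMap ℝ (Matrix (Fin d × Fin d) (Fin d × Fin d) ℂ) (((d:ℝ) ^ 2)⁻¹) with hσ₀def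
  have hr : (0:ℝ) ≤ ((d:ℝ) ^ 2)⁻¹ := by positivity
  have hσ₀smul : σ₀ = ((((d:ℝ) ^ 2)⁻¹ : ℝ) : ℂ) • 1 := aux_algebraMap_matrix_eq _
  have hσ₀PPT : IsPPT σ₀ := by
    refine ⟨?_, ?_, ?_⟩
    · rw [hσ₀smul]; exact aux_posSemidef_real_smul_one hr
    · rw [hσ₀smul, aux_ptranspose_smul_one]; exact aux_posSemidef_real_smul_one hr
    · rw [hσ₀smul, trace_smul, trace_one, smul_eq_mul]
      have hcard : (Fintype.card (Fin d × Fin d) : ℂ) = (d:ℂ) ^ 2 := by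
        simp [Fintype.card_prod]
        ring
      rw [hcard]
      push_cast
      field_simp
  have hσ₀inv : σ₀ * algebraMap ℝ (Matrix (Fin d × Fin d) (Fin d × Fin d) ℂ) ((d:ℝ) ^ 2) = 1 := by
    rw [hσ₀def, ← RingHom.map_mul, inv_mul_cancel₀ (by positivity : ((d:ℝ) ^ 2) ≠ 0), RingHom.map_one]
  have hσ₀range : LinearMap.range (Matrix.toLin' σ₀) = ⊤ := aux_range_top_of_mul_eq_one hσ₀inv
  have hEN : ENalpha α Φ = ⨅ σ : {σ : Matrix (Fin d × Fin d) (Fin d × Fin d) ℂ // IsPPT σ},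
      nuAlpha α (ptranspose Φ) σ.1 := rfl
  rw [hEN]
  apply le_antisymm
  · have hm : muAlpha α (ptranspose Φ) σ₀ = (d:ℝ) := by
      rw [hptr, hσ₀def]
      exact key_upper hd hα
    have hval : nuAlpha α (ptranspose Φ) σ₀ = ((Real.logb 2 (d:ℝ) : ℝ) : EReal) := by
      rw [nuAlpha]
      split_ifs with h
      · rw [hm]
      · exact absurd (by rw [hσ₀range]; exact le_top) h
    have step : (⨅ σs : {σ : Matrix (Fin d × Fin d) (Fin d × Fin d) ℂ // IsPPT σ},
        nuAlpha α (ptranspose Φ) σs.1) ≤ nuAlpha α (ptranspose Φ) σ₀ :=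
      iInf_le (fun σs : {σ : Matrix (Fin d × Fin d) (Fin d × Fin d) ℂ // IsPPT σ} =>
        nuAlpha α (ptranspose Φ) σs.1) ⟨σ₀, hσ₀PPT⟩
    exact step.trans (le_of_eq hval)
  · refine le_iInf fun σs => ?_
    rw [nuAlpha]
    split_ifs with hcond
    · have hu : IsUnit σs.1 := aux_isUnit_of_range_ge (by rw [← hXrange, ← hptr]; exact hcond)
      have hlow : (d:ℝ) ≤ muAlpha α (ptranspose Φ) σs.1 := by
        rw [hptr]
        exact key_lower hd hα σs.2.1 σs.2.2.2 hu
      rw [EReal.coe_le_coe_iff]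
      exact Real.logb_le_logb_of_le (by norm_num) hdpos hlow
    · exact le_top

end
end
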